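/- Let n ≥ 4 be even and k ≥ 1. Then rank((D_n)^k) = 2k, where D_n is the dihedral group of order 2n. -/

import Mathlib

open Subgroup

/-- Minimal length of a word over `X` (positive letters only) representing `g`. -/
noncomputable def wLen {G : Type*} [Group G] (X : Set G) (g : G) : ℕ :=
  sInf {n | ∃ l : List G, (∀ x ∈ l, x ∈ X) ∧ l.length = n ∧ l.prod = g}

/-- Minimal length of a word over `X ∪ X⁻¹` representing `g`. -/
noncomputable def sLen {G : Type*} [Group G] (X : Set G) (g : G) : ℕ :=
  sInf {n | ∃ l : List G, (∀ x ∈ l, x ∈ X ∨ x⁻¹ ∈ X) ∧ l.length = n ∧ l.prod = g}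

/-- Diameter of `G` with respect to `X` (positive words). -/
noncomputable def diamW (G : Type*) [Group G] (X : Set G) : ℕ :=
  sSup (Set.range (wLen X))

/-- Symmetric diameter of `G` with respect to `X`. -/
noncomputable def diamS (G : Type*) [Group G] (X : Set G) : ℕ :=
  sSup (Set.range (sLen X))

/-- Maximum diameter over all generating sets. -/
noncomputable def DW (G : Type*) [Group G] : ℕ :=
  sSup {d | ∃ X : Set G, Subgroup.closure X = ⊤ ∧ d = diamW G X}

/-- Maximum symmetric diameter over all generating sets. -/
noncomputable def DS (G : Type*) [Group G] : ℕ :=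
  sSup {d | ∃ X : Set G, Subgroup.closure X = ⊤ ∧ d = diamS G X}

/-- Minimal size of a generating set of `G`. -/
noncomputable def rk (G : Type*) [Group G] : ℕ :=
  sInf {n | ∃ S : Finset G, S.card = n ∧ Subgroup.closure (S : Set G) = ⊤}

section AuxLemmas

open DihedralGroup

lemma aux_dihedral_gen (n : ℕ) [NeZero n] :
    Subgroup.closure ({r 1, sr 0} : Set (DihedralGroup n)) = ⊤ := by
  rw [eq_top_iff']
  intro x
  have hr : ∀ i : ZMod n, r i ∈ Subgroup.closure ({r 1, sr 0} : Set (DihedralGroup n)) := by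
    intro i
    have : (r 1 : DihedralGroup n) ^ (i.val) = r i := by
      rw [r_one_pow, ZMod.natCast_rightInverse i]
    exact this ▸ pow_mem (subset_closure (by simp)) _
  cases x with
  | r i => exact hr i
  | sr i =>
    have : (sr 0 : DihedralGroup n) * r i = sr i := by rw [sr_mul_r, zero_add]
    exact this ▸ mul_mem (subset_closure (by simp)) (hr i)

def auxPhi {n : ℕ} (h : (2:ℕ) ∣ n) : DihedralGroup n → ZMod 2 × ZMod 2
  | .r i => (ZMod.castHom h (ZMod 2) i, 0)
  | .sr i => (ZMod.castHom h (ZMod 2) i, 1)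

lemma aux_cast_add {n : ℕ} (h : (2:ℕ) ∣ n) (i j : ZMod n) :
    ZMod.castHom h (ZMod 2) (i + j) = ZMod.castHom h (ZMod 2) i + ZMod.castHom h (ZMod 2) j :=
  map_add _ _ _

lemma aux_cast_sub {n : ℕ} (h : (2:ℕ) ∣ n) (i j : ZMod n) :
    ZMod.castHom h (ZMod 2) (j - i) = ZMod.castHom h (ZMod 2) i + ZMod.castHom h (ZMod 2) j := by
  rw [map_sub, CharTwo.sub_eq_add, add_comm]

lemma auxPhi_mul {n : ℕ} (h : (2:ℕ) ∣ n) (x y : DihedralGroup n) :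
    auxPhi h (x * y) = auxPhi h x + auxPhi h y := by
  rcases x with i | i <;> rcases y with j | j <;>
    simp only [auxPhi, r_mul_r, r_mul_sr, sr_mul_r, sr_mul_sr, Prod.mk_add_mk, Prod.mk.injEq,
      aux_cast_add h, aux_cast_sub h] <;> exact ⟨trivial, by decide⟩

lemma auxPhi_one {n : ℕ} (h : (2:ℕ) ∣ n) : auxPhi h (1 : DihedralGroup n) = 0 := by
  show auxPhi h (r 0) = 0
  simp [auxPhi, Prod.ext_iff]

lemma auxPhi_surj {n : ℕ} [NeZero n] (h : (2:ℕ) ∣ n) :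
    Function.Surjective (auxPhi h) := by
  intro ⟨a, b⟩
  have hcast : ZMod.castHom h (ZMod 2) ((a.val : ZMod n)) = a := by
    rw [map_natCast, ZMod.natCast_rightInverse a]
  have hb : b = 0 ∨ b = 1 := by fin_cases b <;> [exact Or.inl rfl; exact Or.inr rfl]
  rcases hb with rfl | rfl
  · exact ⟨.r (a.val : ZMod n), by simp [auxPhi, hcast]⟩
  · exact ⟨.sr (a.val : ZMod n), by simp [auxPhi, hcast]⟩

end AuxLemmas

theorem stmt10 (n k : ℕ) (hn : 4 ≤ n) (heven : Even n) (hk : 1 ≤ k) :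
    rk (Fin k → DihedralGroup n) = 2 * k := by
  haveI : NeZero n := ⟨by omega⟩
  haveI : Fact (1 < n) := ⟨by omega⟩
  have h2 : (2:ℕ) ∣ n := heven.two_dvd
  set G := Fin k → DihedralGroup n
  -- the abelianization-like homomorphism
  let F : G →* Multiplicative (Fin k → ZMod 2 × ZMod 2) :=
    { toFun := fun g => Multiplicative.ofAdd (fun i => auxPhi h2 (g i))
      map_one' := by
        show Multiplicative.ofAdd _ = Multiplicative.ofAdd (0 : Fin k → ZMod 2 × ZMod 2)
        congr 1
        funext i
        exact auxPhi_one h2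
      map_mul' := fun x y => by
        show Multiplicative.ofAdd _ = Multiplicative.ofAdd _ * Multiplicative.ofAdd _
        rw [← ofAdd_add]
        congr 1
        funext i
        exact auxPhi_mul h2 (x i) (y i) }
  have hFsurj : Function.Surjective F := by
    intro y
    choose x hx using fun i => auxPhi_surj h2 (Multiplicative.toAdd y i)
    refine ⟨x, ?_⟩
    show Multiplicative.ofAdd _ = y
    conv_rhs => rw [← ofAdd_toAdd y]
    congr 1
    funext i
    exact hx i
  -- lower bound
  have hlow : ∀ m : ℕ, (∃ S : Finset G, S.card = m ∧
      Subgroup.closure (S : Set G) = ⊤) → 2 * k ≤ m := by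
    rintro m ⟨S, hcard, hclos⟩
    classical
    set T : Finset (Fin k → ZMod 2 × ZMod 2) :=
      S.image (fun g => Multiplicative.toAdd (F g)) with hT
    have hclos' : Subgroup.closure
        ((F : G → Multiplicative (Fin k → ZMod 2 × ZMod 2)) '' S) = ⊤ := by
      rw [← MonoidHom.map_closure, hclos, ← MonoidHom.range_eq_map]
      exact MonoidHom.range_eq_top_of_surjective F hFsurj
    have hspan : Submodule.span (ZMod 2) (T : Set (Fin k → ZMod 2 × ZMod 2)) = ⊤ := by
      rw [Submodule.eq_top_iff']
      intro v
      let H : Subgroup (Multiplicative (Fin k → ZMod 2 × ZMod 2)) :=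
        { carrier := Multiplicative.toAdd ⁻¹'
            (Submodule.span (ZMod 2) (T : Set (Fin k → ZMod 2 × ZMod 2)))
          mul_mem' := fun {a b} ha hb => by
            simp only [Set.mem_preimage, toAdd_mul] at *
            exact Submodule.add_mem _ ha hb
          one_mem' := by
            simp only [Set.mem_preimage, toAdd_one]
            exact Submodule.zero_mem _
          inv_mem' := fun {a} ha => by
            simp only [Set.mem_preimage, toAdd_inv] at *
            exact Submodule.neg_mem _ ha }
      have hle : Subgroup.closure
          ((F : G → Multiplicative (Fin k → ZMod 2 × ZMod 2)) '' S) ≤ H := by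
        rw [Subgroup.closure_le]
        rintro _ ⟨g, hg, rfl⟩
        show Multiplicative.toAdd (F g) ∈
          Submodule.span (ZMod 2) (T : Set (Fin k → ZMod 2 × ZMod 2))
        exact Submodule.subset_span (by
          simp only [hT, Finset.coe_image, Set.mem_image, Finset.mem_coe]
          exact ⟨g, hg, rfl⟩)
      have hv : Multiplicative.ofAdd v ∈ Subgroup.closure
          ((F : G → Multiplicative (Fin k → ZMod 2 × ZMod 2)) '' S) := by
        rw [hclos']; trivial
      exact hle hv
    have hfr : Module.finrank (ZMod 2) (Fin k → ZMod 2 × ZMod 2) = 2 * k := by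
      rw [Module.finrank_pi_fintype]
      simp [Module.finrank_prod, mul_comm]
    calc 2 * k = Module.finrank (ZMod 2) (Fin k → ZMod 2 × ZMod 2) := hfr.symm
      _ = Module.finrank (ZMod 2)
            (Submodule.span (ZMod 2) (T : Set (Fin k → ZMod 2 × ZMod 2))) := by
          rw [hspan, finrank_top]
      _ ≤ T.card := finrank_span_finset_le_card T
      _ ≤ S.card := Finset.card_image_le
      _ = m := hcard
  -- upper bound: explicit generating set
  classical
  let e : Fin k × Bool → G := fun p =>
    Pi.mulSingle p.1 (if p.2 then DihedralGroup.r 1 else DihedralGroup.sr 0)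
  have hne1 : ∀ b : Bool,
      (if b then DihedralGroup.r 1 else DihedralGroup.sr 0 : DihedralGroup n) ≠ 1 := by
    intro b
    cases b <;> simp [DihedralGroup.one_def, -DihedralGroup.r_zero]
  have he_inj : Function.Injective e := by
    rintro ⟨i, b⟩ ⟨j, c⟩ heq
    by_cases hij : i = j
    · subst hij
      have := congrFun heq i
      simp only [e, Pi.mulSingle_eq_same] at this
      cases b <;> cases c <;> simp_all
    · have := congrFun heq j
      simp only [e, Pi.mulSingle_eq_same, Pi.mulSingle_eq_of_ne' hij] at this
      exact absurd this.symm (hne1 c)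
  let S₀ : Finset G := Finset.image e Finset.univ
  have hcard₀ : S₀.card = 2 * k := by
    rw [Finset.card_image_of_injective _ he_inj, Finset.card_univ, Fintype.card_prod,
      Fintype.card_fin, Fintype.card_bool, mul_comm]
  have hgen₀ : Subgroup.closure (S₀ : Set G) = ⊤ := by
    rw [eq_top_iff']
    intro g
    rw [← Finset.noncommProd_mulSingle g]
    apply Subgroup.noncommProd_mem
    intro i _
    have hgi : g i ∈ Subgroup.closure
        ({DihedralGroup.r 1, DihedralGroup.sr 0} : Set (DihedralGroup n)) := by
      rw [aux_dihedral_gen n]; trivial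
    have hmap := Subgroup.mem_map_of_mem
      (MonoidHom.mulSingle (fun _ : Fin k => DihedralGroup n) i) hgi
    rw [MonoidHom.map_closure] at hmap
    refine Subgroup.closure_mono ?_ hmap
    rintro _ ⟨x, hx, rfl⟩
    rcases hx with rfl | rfl
    · exact Finset.mem_coe.2 (Finset.mem_image.2 ⟨(i, true), Finset.mem_univ _, rfl⟩)
    · exact Finset.mem_coe.2 (Finset.mem_image.2 ⟨(i, false), Finset.mem_univ _, rfl⟩)
  unfold rk
  refine le_antisymm (Nat.sInf_le ⟨S₀, hcard₀, hgen₀⟩) ?_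
  exact le_csInf ⟨2 * k, S₀, hcard₀, hgen₀⟩ fun m hm => hlow m hm
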